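/- For every integer r ≥ 1, the decomposition 𝐏_{r−1} = ∇×𝐏_r ⊕ 𝔭(P_{r−2}) holds: every vector field v on ℝ³ with polynomial components of total degree at most r−1 can be written as v = ∇×q + 𝔭p with q ∈ 𝐏_r and p ∈ P_{r−2}, and the two subspaces ∇×𝐏_r and 𝔭(P_{r−2}) intersect only in {0}. -/

import Mathlib

open MeasureTheory

/-- Divergence of a vector field on ℝ³. -/
noncomputable def pdiv (v : (Fin 3 → ℝ) → (Fin 3 → ℝ)) (x : Fin 3 → ℝ) : ℝ :=
  ∑ i : Fin 3, fderiv ℝ (fun y => v y i) x (Pi.single i 1)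

/-- Curl of a vector field on ℝ³. -/
noncomputable def pcurl (v : (Fin 3 → ℝ) → (Fin 3 → ℝ)) (x : Fin 3 → ℝ) : Fin 3 → ℝ :=
  ![fderiv ℝ (fun y => v y 2) x (Pi.single 1 1) - fderiv ℝ (fun y => v y 1) x (Pi.single 2 1),
    fderiv ℝ (fun y => v y 0) x (Pi.single 2 1) - fderiv ℝ (fun y => v y 2) x (Pi.single 0 1),
    fderiv ℝ (fun y => v y 1) x (Pi.single 0 1) - fderiv ℝ (fun y => v y 0) x (Pi.single 1 1)]

/-- Gradient of a scalar field on ℝ³. -/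
noncomputable def pgrad (p : (Fin 3 → ℝ) → ℝ) (x : Fin 3 → ℝ) : Fin 3 → ℝ :=
  fun i => fderiv ℝ p x (Pi.single i 1)

/-- The Poincaré-type operator 𝔭: (𝔭u)(x) = (∫₀¹ t² u(tx) dt) x. -/
noncomputable def poin (u : (Fin 3 → ℝ) → ℝ) (x : Fin 3 → ℝ) : Fin 3 → ℝ :=
  (∫ t in (0:ℝ)..1, t ^ 2 * u (t • x)) • x

/-- `u` is a polynomial function of total degree at most `r` (P_r = {0} if r < 0). -/
def IsPolyDeg (r : ℤ) (u : (Fin 3 → ℝ) → ℝ) : Prop :=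
  ∃ p : MvPolynomial (Fin 3) ℝ, (p = 0 ∨ (p.totalDegree : ℤ) ≤ r) ∧
    ∀ x, MvPolynomial.eval x p = u x

/-- `v` is a vector field with polynomial components of total degree at most `r`. -/
def IsVecPolyDeg (r : ℤ) (v : (Fin 3 → ℝ) → (Fin 3 → ℝ)) : Prop :=
  ∀ i, IsPolyDeg r fun x => v x i

/-- `u` is a polynomial function. -/
def IsPolyFun (u : (Fin 3 → ℝ) → ℝ) : Prop :=
  ∃ p : MvPolynomial (Fin 3) ℝ, ∀ x, MvPolynomial.eval x p = u x

/-- Membership in S_k = {p ∈ (P̃_k)³ : x·p(x) = 0}. -/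
def MemS (k : ℕ) (v : (Fin 3 → ℝ) → (Fin 3 → ℝ)) : Prop :=
  (∀ i, ∃ p : MvPolynomial (Fin 3) ℝ, p.IsHomogeneous k ∧ ∀ x, MvPolynomial.eval x p = v x i) ∧
    ∀ x, ∑ i : Fin 3, x i * v x i = 0

/-- Membership in the first-family Nédélec space R_k = 𝐏_{k-1} ⊕ S_k. -/
def MemR (k : ℕ) (v : (Fin 3 → ℝ) → (Fin 3 → ℝ)) : Prop :=
  ∃ v₁ v₂, IsVecPolyDeg ((k : ℤ) - 1) v₁ ∧ MemS k v₂ ∧ v = v₁ + v₂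


open MvPolynomial

noncomputable section PolyAux

abbrev R3 := MvPolynomial (Fin 3) ℝ

def pdivP (v : Fin 3 → R3) : R3 := ∑ i : Fin 3, pderiv i (v i)

def pcurlP (v : Fin 3 → R3) : Fin 3 → R3 :=
  ![pderiv 1 (v 2) - pderiv 2 (v 1),
    pderiv 2 (v 0) - pderiv 0 (v 2),
    pderiv 0 (v 1) - pderiv 1 (v 0)]

def crossXP (v : Fin 3 → R3) : Fin 3 → R3 :=
  ![v 1 * X 2 - v 2 * X 1, v 2 * X 0 - v 0 * X 2, v 0 * X 1 - v 1 * X 0]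

lemma degree_eq_sum_univ (m : Fin 3 →₀ ℕ) : m.degree = ∑ i : Fin 3, m i := by
  rw [Finsupp.degree]
  exact Finset.sum_subset (Finset.subset_univ _)
    (fun x _ hx => Finsupp.notMem_support_iff.1 hx)

lemma support_sum_eq {p : R3} {d : ℕ} (hp : p.IsHomogeneous d) {m : Fin 3 →₀ ℕ}
    (hm : m ∈ p.support) : ∑ i : Fin 3, m i = d := by
  rw [← degree_eq_sum_univ]
  by_contra h
  exact (MvPolynomial.mem_support_iff.1 hm) (hp.coeff_eq_zero h)

lemma X_mul_pderiv_monomial (i : Fin 3) (m : Fin 3 →₀ ℕ) (c : ℝ) :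
    X i * pderiv i (monomial m c) = monomial m (c * m i) := by
  rw [pderiv_monomial]
  rcases Nat.eq_zero_or_pos (m i) with h | h
  · simp [h]
  · rw [X, monomial_mul, one_mul,
      add_tsub_cancel_of_le (Finsupp.single_le_iff.2 h)]

lemma euler {p : R3} {d : ℕ} (hp : p.IsHomogeneous d) :
    ∑ i : Fin 3, X i * pderiv i p = C (d : ℝ) * p := by
  have key : ∀ i : Fin 3, X i * pderiv i p
      = ∑ m ∈ p.support, monomial m (coeff m p * m i) := by
    intro i
    conv_lhs => rw [p.as_sum]
    rw [map_sum, Finset.mul_sum]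
    exact Finset.sum_congr rfl fun m _ => X_mul_pderiv_monomial i m _
  calc ∑ i : Fin 3, X i * pderiv i p
      = ∑ m ∈ p.support, ∑ i : Fin 3, monomial m (coeff m p * m i) := by
        rw [Finset.sum_congr rfl fun i _ => key i, Finset.sum_comm]
    _ = ∑ m ∈ p.support, monomial m ((d : ℝ) * coeff m p) := by
        refine Finset.sum_congr rfl fun m hm => ?_
        rw [← map_sum, ← Finset.mul_sum]
        congr 1
        rw [mul_comm]
        congr 1
        exact_mod_cast congrArg (Nat.cast (R := ℝ)) (support_sum_eq hp hm)
    _ = C (d : ℝ) * p := by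
        conv_rhs => rw [p.as_sum]
        rw [Finset.mul_sum]
        exact Finset.sum_congr rfl fun m _ => (C_mul_monomial ..).symm

lemma pderiv_isHomogeneous {p : R3} {d : ℕ} (hp : p.IsHomogeneous (d + 1)) (i : Fin 3) :
    (pderiv i p).IsHomogeneous d := by
  conv_lhs => rw [p.as_sum]
  rw [map_sum]
  refine IsHomogeneous.sum _ _ _ fun m hm => ?_
  rw [pderiv_monomial]
  rcases Nat.eq_zero_or_pos (m i) with h | h
  · simp [h, isHomogeneous_zero]
  · refine isHomogeneous_monomial _ ?_
    have hsum := support_sum_eq hp hm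
    rw [degree_eq_sum_univ]
    have hs1 := Fintype.sum_eq_add_sum_compl i (fun j => m j)
    have hs2 := Fintype.sum_eq_add_sum_compl i (fun j => ((m - Finsupp.single i 1 : Fin 3 →₀ ℕ)) j)
    have hcompl : ∑ j ∈ ({i}ᶜ : Finset (Fin 3)), ((m - Finsupp.single i 1 : Fin 3 →₀ ℕ)) j
        = ∑ j ∈ ({i}ᶜ : Finset (Fin 3)), m j := by
      refine Finset.sum_congr rfl fun j hj => ?_
      have hji : ¬ i = j := fun hh => by simp [hh.symm] at hj
      rw [Finsupp.tsub_apply, Finsupp.single_apply, if_neg hji, Nat.sub_zero]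
    have hii : ((m - Finsupp.single i 1 : Fin 3 →₀ ℕ)) i = m i - 1 := by
      rw [Finsupp.tsub_apply, Finsupp.single_apply, if_pos rfl]
    omega

lemma pderiv_isHomogeneous_zero {p : R3} (hp : p.IsHomogeneous 0) (i : Fin 3) :
    pderiv i p = 0 := by
  conv_lhs => rw [p.as_sum]
  rw [map_sum]
  refine Finset.sum_eq_zero fun m hm => ?_
  have hsum := support_sum_eq hp hm
  have hle : m i ≤ ∑ j : Fin 3, m j :=
    Finset.single_le_sum (f := fun j => m j) (fun _ _ => Nat.zero_le _) (Finset.mem_univ i)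
  have hmi : m i = 0 := by omega
  simp [pderiv_monomial, hmi]

lemma pderiv_comm (i j : Fin 3) (p : R3) :
    pderiv i (pderiv j p) = pderiv j (pderiv i p) := by
  conv_lhs => rw [p.as_sum]
  conv_rhs => rw [p.as_sum]
  rw [map_sum, map_sum, map_sum, map_sum]
  refine Finset.sum_congr rfl fun m _ => ?_
  simp only [pderiv_monomial]
  rcases eq_or_ne i j with rfl | hij
  · rfl
  · have h1 : ((m - Finsupp.single j 1 : Fin 3 →₀ ℕ)) i = m i := by
      rw [Finsupp.tsub_apply, Finsupp.single_apply, if_neg (Ne.symm hij), Nat.sub_zero]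
    have h2 : ((m - Finsupp.single i 1 : Fin 3 →₀ ℕ)) j = m j := by
      rw [Finsupp.tsub_apply, Finsupp.single_apply, if_neg hij, Nat.sub_zero]
    rw [h1, h2]
    have hexp : (m - Finsupp.single j 1 - Finsupp.single i 1 : Fin 3 →₀ ℕ)
        = m - Finsupp.single i 1 - Finsupp.single j 1 := by
      ext a
      simp only [Finsupp.tsub_apply, Finsupp.single_apply]
      omega
    rw [hexp, mul_right_comm]

end PolyAux

section More
open Finset

lemma eval_monomial_smul (t : ℝ) (x : Fin 3 → ℝ) (m : Fin 3 →₀ ℕ) (c : ℝ) :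
    eval (t • x) (monomial m c) = t ^ (∑ i : Fin 3, m i) * eval x (monomial m c) := by
  rw [eval_monomial, eval_monomial, Finsupp.prod, Finsupp.prod]
  have h : ∀ j ∈ m.support, ((t • x) j) ^ m j = t ^ m j * x j ^ m j := by
    intro j _; rw [Pi.smul_apply, smul_eq_mul, mul_pow]
  rw [Finset.prod_congr rfl h, Finset.prod_mul_distrib, Finset.prod_pow_eq_pow_sum]
  rw [show ∑ i : Fin 3, m i = m.degree from (degree_eq_sum_univ m).symm, Finsupp.degree]
  change _ = t ^ (∑ i ∈ m.support, m i) * _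
  ring

lemma eval_smul_homog {p : R3} {d : ℕ} (hp : p.IsHomogeneous d) (t : ℝ) (x : Fin 3 → ℝ) :
    eval (t • x) p = t ^ d * eval x p := by
  conv_lhs => rw [p.as_sum]
  conv_rhs => rw [p.as_sum]
  rw [map_sum, map_sum, Finset.mul_sum]
  refine Finset.sum_congr rfl fun m hm => ?_
  rw [eval_monomial_smul, support_sum_eq hp hm]

noncomputable def poinVecP (M : ℕ) (P : R3) : Fin 3 → R3 :=
  fun i => ∑ d ∈ Finset.range M, C ((d : ℝ) + 3)⁻¹ * (homogeneousComponent d P * X i)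

lemma sum_hc {P : R3} {M : ℕ} (h : P.totalDegree < M) :
    ∑ d ∈ Finset.range M, homogeneousComponent d P = P := by
  conv_rhs => rw [← sum_homogeneousComponent P]
  exact (Finset.sum_subset (Finset.range_subset_range.2 h)
    fun d _ hd => homogeneousComponent_eq_zero _ _ (by simp only [Finset.mem_range] at hd ⊢; omega)).symm

lemma C3_eq : (C (3:ℝ) : R3) = 3 := map_ofNat _ 3

lemma pdivP_mul_X {P : R3} {d : ℕ} (hP : P.IsHomogeneous d) :
    ∑ i : Fin 3, pderiv i (P * X i) = C ((d : ℝ) + 3) * P := by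
  have h3 : ∀ i : Fin 3, pderiv i (P * X i) = X i * pderiv i P + P := by
    intro i; rw [pderiv_mul, pderiv_X_self, mul_one, mul_comm]
  rw [Finset.sum_congr rfl fun i _ => h3 i, Finset.sum_add_distrib, euler hP,
    Finset.sum_const, Finset.card_univ, Fintype.card_fin, map_add, C3_eq, add_mul,
    nsmul_eq_mul]
  norm_num

lemma pdivP_poinVecP {P : R3} {M : ℕ} (h : P.totalDegree < M) :
    pdivP (poinVecP M P) = P := by
  unfold pdivP poinVecP
  have h1 : ∀ i : Fin 3,
      pderiv i (∑ d ∈ Finset.range M, C ((d:ℝ)+3)⁻¹ * (homogeneousComponent d P * X i))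
      = ∑ d ∈ Finset.range M, C ((d:ℝ)+3)⁻¹ * pderiv i (homogeneousComponent d P * X i) := by
    intro i; rw [map_sum]; exact Finset.sum_congr rfl fun d _ => pderiv_C_mul
  rw [Finset.sum_congr rfl fun i _ => h1 i, Finset.sum_comm]
  have h2 : ∀ d ∈ Finset.range M,
      ∑ i : Fin 3, C ((d:ℝ)+3)⁻¹ * pderiv i (homogeneousComponent d P * X i)
      = homogeneousComponent d P := by
    intro d _
    rw [← Finset.mul_sum, pdivP_mul_X (homogeneousComponent_isHomogeneous d P),
      ← mul_assoc, ← C_mul, inv_mul_cancel₀ (by positivity), C_1, one_mul]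
  rw [Finset.sum_congr rfl h2, sum_hc h]

lemma pdivP_pcurlP (v : Fin 3 → R3) : pdivP (pcurlP v) = 0 := by
  unfold pdivP pcurlP
  rw [Fin.sum_univ_three]
  simp only [Matrix.cons_val_zero, Matrix.cons_val_one, Matrix.head_cons,
    Matrix.cons_val_two, Matrix.tail_cons, map_sub]
  rw [pderiv_comm 0 1, pderiv_comm 0 2, pderiv_comm 1 2]
  ring

lemma pcurlP_crossXP {w : Fin 3 → R3} {d : ℕ} (hw : ∀ i, (w i).IsHomogeneous d)
    (hdiv : pdivP w = 0) (i : Fin 3) :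
    pcurlP (crossXP w) i = C ((d:ℝ) + 2) * w i := by
  have e0 := euler (hw 0); have e1 := euler (hw 1); have e2 := euler (hw 2)
  rw [Fin.sum_univ_three] at e0 e1 e2
  have hd : pderiv 0 (w 0) + pderiv 1 (w 1) + pderiv 2 (w 2) = 0 := by
    rw [← Fin.sum_univ_three (fun j => pderiv j (w j))]
    exact hdiv
  have hC : (C ((d:ℝ) + 2) : R3) = C (d:ℝ) + 2 := by
    rw [map_add, map_ofNat]
  have p01 : pderiv (0:Fin 3) (X 1 : R3) = 0 := pderiv_X_of_ne (by decide)
  have p02 : pderiv (0:Fin 3) (X 2 : R3) = 0 := pderiv_X_of_ne (by decide)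
  have p10 : pderiv (1:Fin 3) (X 0 : R3) = 0 := pderiv_X_of_ne (by decide)
  have p12 : pderiv (1:Fin 3) (X 2 : R3) = 0 := pderiv_X_of_ne (by decide)
  have p20 : pderiv (2:Fin 3) (X 0 : R3) = 0 := pderiv_X_of_ne (by decide)
  have p21 : pderiv (2:Fin 3) (X 1 : R3) = 0 := pderiv_X_of_ne (by decide)
  fin_cases i
  · simp only [pcurlP, crossXP, Fin.zero_eta, Fin.isValue, Matrix.cons_val_zero,
      Matrix.cons_val_one, Matrix.head_cons, Matrix.cons_val_two, Matrix.tail_cons,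
      map_sub, pderiv_mul, pderiv_X_self, p01, p02, p10, p12, p20, p21,
      mul_one, mul_zero, hC]
    linear_combination e0 - X 0 * hd
  · simp only [pcurlP, crossXP, Fin.mk_one, Fin.isValue, Matrix.cons_val_zero,
      Matrix.cons_val_one, Matrix.head_cons, Matrix.cons_val_two, Matrix.tail_cons,
      map_sub, pderiv_mul, pderiv_X_self, p01, p02, p10, p12, p20, p21,
      mul_one, mul_zero, hC]
    linear_combination e1 - X 1 * hd
  · simp only [pcurlP, crossXP, Fin.isValue, Matrix.cons_val_zero,
      Matrix.cons_val_one, Matrix.head_cons, Matrix.cons_val_two, Matrix.tail_cons,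
      map_sub, pderiv_mul, pderiv_X_self, p01, p02, p10, p12, p20, p21,
      mul_one, mul_zero, hC, show (⟨2, by norm_num⟩ : Fin 3) = 2 from rfl]
    linear_combination e2 - X 2 * hd

end More

section Analytic
open MeasureTheory

lemma hasFDerivAt_eval (p : R3) (x : Fin 3 → ℝ) :
    HasFDerivAt (fun y : Fin 3 → ℝ => eval y p)
      (∑ i : Fin 3, eval x (pderiv i p) • (ContinuousLinearMap.proj i :
        (Fin 3 → ℝ) →L[ℝ] ℝ)) x := by
  induction p using MvPolynomial.induction_on with
  | C a =>
      have : (∑ i : Fin 3, eval x (pderiv i (C a)) • (ContinuousLinearMap.proj i :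
          (Fin 3 → ℝ) →L[ℝ] ℝ)) = 0 := by
        simp [pderiv_C]
      rw [this]
      refine (hasFDerivAt_const a x).congr_of_eventuallyEq ?_
      filter_upwards with y
      simp
  | add p q hp hq =>
      simp only [map_add, add_smul, Finset.sum_add_distrib]
      exact hp.add hq
  | mul_X p i hp =>
      have p01 : pderiv (0:Fin 3) (X 1 : R3) = 0 := pderiv_X_of_ne (by decide)
      have p02 : pderiv (0:Fin 3) (X 2 : R3) = 0 := pderiv_X_of_ne (by decide)
      have p10 : pderiv (1:Fin 3) (X 0 : R3) = 0 := pderiv_X_of_ne (by decide)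
      have p12 : pderiv (1:Fin 3) (X 2 : R3) = 0 := pderiv_X_of_ne (by decide)
      have p20 : pderiv (2:Fin 3) (X 0 : R3) = 0 := pderiv_X_of_ne (by decide)
      have p21 : pderiv (2:Fin 3) (X 1 : R3) = 0 := pderiv_X_of_ne (by decide)
      have hXi : HasFDerivAt (fun y : Fin 3 → ℝ => y i)
          (ContinuousLinearMap.proj i : (Fin 3 → ℝ) →L[ℝ] ℝ) x := by
        exact hasFDerivAt_apply i x
      have key := HasFDerivAt.mul (𝕜 := ℝ) hp hXi
      have hfun : (fun y : Fin 3 → ℝ => eval y (p * X i))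
          = fun y => eval y p * y i := by
        funext y; simp [map_mul]
      rw [hfun]
      refine key.congr_fderiv ?_
      ext v
      simp only [ContinuousLinearMap.add_apply, ContinuousLinearMap.coe_smul',
        ContinuousLinearMap.smul_apply, ContinuousLinearMap.sum_apply,
        ContinuousLinearMap.proj_apply, smul_eq_mul, Pi.smul_apply]
      rw [Fin.sum_univ_three, Fin.sum_univ_three]
      fin_cases i <;>
        (simp only [Fin.zero_eta, Fin.mk_one, show (⟨2, by norm_num⟩ : Fin 3) = 2 from rfl,
          pderiv_mul, map_add, map_mul, eval_X, pderiv_X_self,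
          p01, p02, p10, p12, p20, p21, map_zero, map_one, mul_zero, mul_one,
          add_zero, zero_add, Fin.isValue] <;> ring)

end Analytic

lemma fderiv_eval (p : R3) (x : Fin 3 → ℝ) (i : Fin 3) :
    fderiv ℝ (fun y => eval y p) x (Pi.single i 1) = eval x (pderiv i p) := by
  rw [(hasFDerivAt_eval p x).fderiv]
  rw [ContinuousLinearMap.sum_apply]
  rw [Finset.sum_eq_single i]
  · simp
  · intro j _ hj
    simp [Pi.single_apply, hj]
  · simp

lemma pdiv_eval (v : (Fin 3 → ℝ) → Fin 3 → ℝ) (V : Fin 3 → R3)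
    (hv : ∀ x i, v x i = eval x (V i)) (x : Fin 3 → ℝ) :
    pdiv v x = eval x (pdivP V) := by
  unfold pdiv pdivP
  rw [map_sum]
  refine Finset.sum_congr rfl fun i _ => ?_
  have h : (fun y => v y i) = fun y => eval y (V i) := funext fun y => hv y i
  rw [h, fderiv_eval]

lemma pcurl_eval (v : (Fin 3 → ℝ) → Fin 3 → ℝ) (V : Fin 3 → R3)
    (hv : ∀ x i, v x i = eval x (V i)) (x : Fin 3 → ℝ) (i : Fin 3) :
    pcurl v x i = eval x (pcurlP V i) := by
  have h : ∀ j, (fun y => v y j) = fun y => eval y (V j) := fun j => funext fun y => hv y j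
  fin_cases i <;>
    simp only [pcurl, pcurlP, Fin.zero_eta, Fin.mk_one, show (⟨2, by norm_num⟩ : Fin 3) = 2 from rfl,
      Matrix.cons_val_zero, Matrix.cons_val_one, Matrix.head_cons,
      Matrix.cons_val_two, Matrix.tail_cons, Fin.isValue, h, fderiv_eval, map_sub]

lemma integral_homog {P : R3} {e : ℕ} (hP : P.IsHomogeneous e) (x : Fin 3 → ℝ) :
    ∫ t in (0:ℝ)..1, t ^ 2 * eval (t • x) P = ((e : ℝ) + 3)⁻¹ * eval x P := by
  have h : ∀ t : ℝ, t ^ 2 * eval (t • x) P = eval x P * t ^ (e + 2) := by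
    intro t; rw [eval_smul_homog hP]; ring
  simp_rw [h]
  rw [intervalIntegral.integral_const_mul, integral_pow]
  rw [one_pow, zero_pow (by omega)]
  push_cast
  ring

lemma poin_eval_sum (N : ℕ) (P : ℕ → R3) (e : ℕ → ℕ)
    (hP : ∀ d, d < N → (P d).IsHomogeneous (e d))
    (p : (Fin 3 → ℝ) → ℝ) (hp : ∀ y, p y = ∑ d ∈ Finset.range N, eval y (P d))
    (x : Fin 3 → ℝ) (i : Fin 3) :
    poin p x i = ∑ d ∈ Finset.range N, ((e d : ℝ) + 3)⁻¹ * eval x (P d) * x i := by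
  unfold poin
  have h1 : ∀ t : ℝ, t ^ 2 * p (t • x)
      = ∑ d ∈ Finset.range N, eval x (P d) * t ^ (e d + 2) := by
    intro t
    rw [hp, Finset.mul_sum]
    refine Finset.sum_congr rfl fun d hd => ?_
    rw [eval_smul_homog (hP d (Finset.mem_range.1 hd))]; ring
  have h2 : (∫ t in (0:ℝ)..1, t ^ 2 * p (t • x))
      = ∑ d ∈ Finset.range N, eval x (P d) * ((e d : ℝ) + 3)⁻¹ := by
    rw [intervalIntegral.integral_congr
      (g := fun t => ∑ d ∈ Finset.range N, eval x (P d) * t ^ (e d + 2)) (fun t _ => h1 t)]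
    rw [intervalIntegral.integral_finset_sum]
    · refine Finset.sum_congr rfl fun d hd => ?_
      rw [intervalIntegral.integral_const_mul, integral_pow]
      rw [one_pow, zero_pow (by omega)]
      push_cast
      ring
    · intro d _
      exact Continuous.intervalIntegrable (by continuity) _ _
  rw [h2, Pi.smul_apply, smul_eq_mul, Finset.sum_mul]
  exact Finset.sum_congr rfl fun d _ => by ring

lemma poin_eval_zero (p : (Fin 3 → ℝ) → ℝ) (hp : ∀ y, p y = 0) (x : Fin 3 → ℝ) :
    poin p x = 0 := by
  unfold poin
  have h1 : ∀ t : ℝ, t ^ 2 * p (t • x) = 0 := fun t => by rw [hp]; ring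
  rw [intervalIntegral.integral_congr (g := fun _ => (0:ℝ)) (fun t _ => h1 t),
    intervalIntegral.integral_const, smul_zero, zero_smul]

lemma crossXP_isHomogeneous {v : Fin 3 → R3} {d : ℕ} (hv : ∀ i, (v i).IsHomogeneous d)
    (i : Fin 3) : (crossXP v i).IsHomogeneous (d + 1) := by
  fin_cases i <;>
    (simp only [crossXP, Fin.zero_eta, Fin.mk_one, show (⟨2, by norm_num⟩ : Fin 3) = 2 from rfl,
      Matrix.cons_val_zero, Matrix.cons_val_one, Matrix.head_cons,
      Matrix.cons_val_two, Matrix.tail_cons, Fin.isValue];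
     exact ((hv _).mul (isHomogeneous_X _ _)).sub ((hv _).mul (isHomogeneous_X _ _)))

lemma pcurlP_C_mul (c : ℝ) (w : Fin 3 → R3) (i : Fin 3) :
    pcurlP (fun j => C c * w j) i = C c * pcurlP w i := by
  fin_cases i <;>
    (simp only [pcurlP, Fin.zero_eta, Fin.mk_one, show (⟨2, by norm_num⟩ : Fin 3) = 2 from rfl,
      Matrix.cons_val_zero, Matrix.cons_val_one, Matrix.head_cons,
      Matrix.cons_val_two, Matrix.tail_cons, Fin.isValue, pderiv_C_mul, mul_sub])

lemma homog_exists (d : ℕ) (v : Fin 3 → R3) (hv : ∀ i, (v i).IsHomogeneous d) :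
    ∃ (Q : Fin 3 → R3) (P : R3),
      (∀ i, (Q i).IsHomogeneous (d + 1)) ∧ P.IsHomogeneous (d - 1) ∧ (d = 0 → P = 0) ∧
      ∀ i, v i = pcurlP Q i + C ((d : ℝ) + 2)⁻¹ * (P * X i) := by
  cases d with
  | zero =>
      have hdiv : pdivP v = 0 :=
        Finset.sum_eq_zero fun i _ => pderiv_isHomogeneous_zero (hv i) i
      refine ⟨fun j => C (((0:ℕ):ℝ) + 2)⁻¹ * crossXP v j, 0, ?_, isHomogeneous_zero _ _ _,
        fun _ => rfl, ?_⟩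
      · exact fun i => (crossXP_isHomogeneous hv i).C_mul _
      · intro i
        rw [pcurlP_C_mul, pcurlP_crossXP hv hdiv i, ← mul_assoc, ← C_mul,
          inv_mul_cancel₀ (by norm_num), C_1, one_mul, zero_mul, mul_zero, add_zero]
  | succ e =>
      have hP : (pdivP v).IsHomogeneous e :=
        IsHomogeneous.sum _ _ _ fun i _ => pderiv_isHomogeneous (hv i) i
      set P : R3 := pdivP v with hPdef
      set w : Fin 3 → R3 := fun i => v i - C ((e:ℝ) + 3)⁻¹ * (P * X i) with hwdef
      have hw : ∀ i, (w i).IsHomogeneous (e + 1) := by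
        intro i
        exact (hv i).sub ((hP.mul (isHomogeneous_X _ _)).C_mul _)
      have hdivw : pdivP w = 0 := by
        unfold pdivP
        have hterm : ∀ i : Fin 3, pderiv i (w i)
            = pderiv i (v i) - C ((e:ℝ) + 3)⁻¹ * pderiv i (P * X i) := by
          intro i
          rw [hwdef, map_sub, pderiv_C_mul]
        rw [Finset.sum_congr rfl fun i _ => hterm i, Finset.sum_sub_distrib,
          ← Finset.mul_sum, pdivP_mul_X hP, ← mul_assoc, ← C_mul,
          inv_mul_cancel₀ (by positivity), C_1, one_mul]
        exact sub_self _
      refine ⟨fun j => C (((e + 1 : ℕ) : ℝ) + 2)⁻¹ * crossXP w j, P, ?_, ?_, ?_, ?_⟩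
      · exact fun i => (crossXP_isHomogeneous hw i).C_mul _
      · simpa using hP
      · exact fun h => absurd h (Nat.succ_ne_zero e)
      · intro i
        rw [pcurlP_C_mul, pcurlP_crossXP hw hdivw i, ← mul_assoc, ← C_mul,
          inv_mul_cancel₀ (by positivity), C_1, one_mul]
        have hc : (((e + 1 : ℕ) : ℝ) + 2)⁻¹ = ((e:ℝ) + 3)⁻¹ := by push_cast; ring_nf
        rw [hc, hwdef]
        ring

lemma pcurlP_sum (s : Finset ℕ) (W : ℕ → Fin 3 → R3) (i : Fin 3) :
    pcurlP (fun j => ∑ d ∈ s, W d j) i = ∑ d ∈ s, pcurlP (W d) i := by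
  fin_cases i <;>
    (simp only [pcurlP, Fin.zero_eta, Fin.mk_one, show (⟨2, by norm_num⟩ : Fin 3) = 2 from rfl,
      Matrix.cons_val_zero, Matrix.cons_val_one, Matrix.head_cons,
      Matrix.cons_val_two, Matrix.tail_cons, Fin.isValue, map_sum,
      Finset.sum_sub_distrib])

theorem stmt_4' (r : ℤ) (hr : 1 ≤ r) :
    (∀ v : (Fin 3 → ℝ) → (Fin 3 → ℝ), IsVecPolyDeg (r - 1) v →
      ∃ (q : (Fin 3 → ℝ) → (Fin 3 → ℝ)) (p : (Fin 3 → ℝ) → ℝ),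
        IsVecPolyDeg r q ∧ IsPolyDeg (r - 2) p ∧ ∀ x, v x = pcurl q x + poin p x) ∧
    ∀ (q : (Fin 3 → ℝ) → (Fin 3 → ℝ)) (p : (Fin 3 → ℝ) → ℝ),
      IsVecPolyDeg r q → IsPolyDeg (r - 2) p → (∀ x, pcurl q x = poin p x) →
      ∀ x, pcurl q x = 0 := by
  constructor
  · -- existence
    intro v hv
    choose V hVdeg hVeval using hv
    set n : ℕ := (r - 1).toNat with hn
    have hnr : (n : ℤ) = r - 1 := Int.toNat_of_nonneg (by omega)
    have hdegV : ∀ i, (V i).totalDegree < n + 1 := by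
      intro i
      rcases hVdeg i with h | h
      · rw [h]
        simp only [totalDegree_zero]
        omega
      · have h2 : ((V i).totalDegree : ℤ) ≤ (n : ℤ) := by omega
        have h3 : (V i).totalDegree ≤ n := by exact_mod_cast h2
        omega
    choose Q P hQ hP hP0 hid using
      fun d : ℕ => homog_exists d (fun i => homogeneousComponent d (V i))
        (fun i => homogeneousComponent_isHomogeneous d (V i))
    refine ⟨fun x i => eval x (∑ d ∈ Finset.range (n+1), Q d i),
            fun x => eval x (∑ d ∈ Finset.range (n+1), P d), ?_, ?_, ?_⟩
    · -- IsVecPolyDeg r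
      intro i
      refine ⟨∑ d ∈ Finset.range (n+1), Q d i, Or.inr ?_, fun x => rfl⟩
      have hb : (∑ d ∈ Finset.range (n+1), Q d i).totalDegree ≤ n + 1 :=
        totalDegree_finsetSum_le fun d hd => le_trans (hQ d i).totalDegree_le
          (by have := Finset.mem_range.1 hd; omega)
      have : ((n : ℤ) + 1) = r := by omega
      calc ((∑ d ∈ Finset.range (n+1), Q d i).totalDegree : ℤ) ≤ ((n + 1 : ℕ) : ℤ) := by
            exact_mod_cast hb
        _ = r := by push_cast; omega
    · -- IsPolyDeg (r - 2)
      by_cases hr2 : 2 ≤ r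
      · refine ⟨∑ d ∈ Finset.range (n+1), P d, Or.inr ?_, fun x => rfl⟩
        have hn1 : 1 ≤ n := by omega
        have hb : (∑ d ∈ Finset.range (n+1), P d).totalDegree ≤ n - 1 := by
          refine totalDegree_finsetSum_le fun d hd => ?_
          rcases Nat.eq_zero_or_pos d with rfl | hdpos
          · rw [hP0 0 rfl]
            simp
          · exact le_trans (hP d).totalDegree_le (by have := Finset.mem_range.1 hd; omega)
        calc ((∑ d ∈ Finset.range (n+1), P d).totalDegree : ℤ) ≤ ((n - 1 : ℕ) : ℤ) := by
              exact_mod_cast hb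
          _ = r - 2 := by rw [Nat.cast_sub hn1]; omega
      · refine ⟨∑ d ∈ Finset.range (n+1), P d, Or.inl ?_, fun x => rfl⟩
        have hn0 : n = 0 := by omega
        rw [hn0]
        rw [Finset.sum_range_one]
        exact hP0 0 rfl
    · -- pointwise identity
      intro x
      funext i
      have hcurl : pcurl (fun y j => eval y (∑ d ∈ Finset.range (n+1), Q d j)) x i
          = ∑ d ∈ Finset.range (n+1), eval x (pcurlP (Q d) i) := by
        rw [pcurl_eval _ (fun j => ∑ d ∈ Finset.range (n+1), Q d j) (fun y j => rfl) x i,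
          pcurlP_sum, map_sum]
      have hpoin : poin (fun y => eval y (∑ d ∈ Finset.range (n+1), P d)) x i
          = ∑ d ∈ Finset.range (n+1), ((d:ℝ) + 2)⁻¹ * eval x (P d) * x i := by
        rw [poin_eval_sum (n+1) P (fun d => d - 1) (fun d _ => hP d) _
          (fun y => by rw [map_sum]) x i]
        refine Finset.sum_congr rfl fun d _ => ?_
        rcases Nat.eq_zero_or_pos d with rfl | hdpos
        · rw [hP0 0 rfl]
          simp
        · have hcast : ((d - 1 : ℕ) : ℝ) = (d : ℝ) - 1 := by
            push_cast [Nat.cast_sub hdpos]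
            ring
          rw [hcast, show (d:ℝ) - 1 + 3 = (d:ℝ) + 2 from by ring]
      calc v x i = eval x (V i) := (hVeval i x).symm
        _ = ∑ d ∈ Finset.range (n+1), eval x (homogeneousComponent d (V i)) := by
            conv_lhs => rw [← sum_hc (P := V i) (M := n+1) (hdegV i)]
            rw [map_sum]
        _ = ∑ d ∈ Finset.range (n+1),
              (eval x (pcurlP (Q d) i) + ((d:ℝ) + 2)⁻¹ * eval x (P d) * x i) := by
            refine Finset.sum_congr rfl fun d _ => ?_
            show eval x (homogeneousComponent d (V i)) = _
            rw [hid d i, map_add, map_mul, eval_C, map_mul, eval_X]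
            ring
        _ = _ := by
            rw [Pi.add_apply, hcurl, hpoin, Finset.sum_add_distrib]
  · -- uniqueness
    intro q p hq hp heq x
    choose Qf hQdeg hQeval using hq
    obtain ⟨P, hPdeg, hPeval⟩ := hp
    set M := P.totalDegree + 1 with hM
    have hcurl : ∀ y i, pcurl q y i = eval y (pcurlP Qf i) :=
      fun y i => pcurl_eval q Qf (fun z j => (hQeval j z).symm) y i
    have hpoin : ∀ y i, poin p y i = eval y (poinVecP M P i) := by
      intro y i
      rw [poin_eval_sum M (fun d => homogeneousComponent d P) (fun d => d)
        (fun d _ => homogeneousComponent_isHomogeneous d P)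
        p (fun z => by
          rw [← hPeval z]
          conv_lhs => rw [← sum_hc (P := P) (M := M) (Nat.lt_succ_self _)]
          rw [map_sum]) y i]
      unfold poinVecP
      rw [map_sum]
      refine Finset.sum_congr rfl fun d _ => ?_
      rw [map_mul, eval_C, map_mul, eval_X]
      ring
    have h3 : pcurl q = poin p := funext heq
    have hpz : ∀ y, p y = 0 := by
      intro y
      have h1 : pdiv (pcurl q) y = eval y (pdivP (pcurlP Qf)) :=
        pdiv_eval _ _ (fun z i => hcurl z i) y
      have h2 : pdiv (poin p) y = eval y (pdivP (poinVecP M P)) :=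
        pdiv_eval _ _ (fun z i => hpoin z i) y
      calc p y = eval y P := (hPeval y).symm
        _ = eval y (pdivP (poinVecP M P)) := by rw [pdivP_poinVecP (Nat.lt_succ_self _)]
        _ = pdiv (poin p) y := h2.symm
        _ = pdiv (pcurl q) y := by rw [h3]
        _ = eval y (pdivP (pcurlP Qf)) := h1
        _ = 0 := by rw [pdivP_pcurlP]; exact map_zero _
    rw [heq x, poin_eval_zero p hpz x]

/-- the decomposition 𝐏_{r-1} = ∇×𝐏_r ⊕ 𝔭(P_{r-2}) for r ≥ 1. -/
theorem stmt_4 (r : ℤ) (hr : 1 ≤ r) :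
    (∀ v : (Fin 3 → ℝ) → (Fin 3 → ℝ), IsVecPolyDeg (r - 1) v →
      ∃ (q : (Fin 3 → ℝ) → (Fin 3 → ℝ)) (p : (Fin 3 → ℝ) → ℝ),
        IsVecPolyDeg r q ∧ IsPolyDeg (r - 2) p ∧ ∀ x, v x = pcurl q x + poin p x) ∧
    ∀ (q : (Fin 3 → ℝ) → (Fin 3 → ℝ)) (p : (Fin 3 → ℝ) → ℝ),
      IsVecPolyDeg r q → IsPolyDeg (r - 2) p → (∀ x, pcurl q x = poin p x) →
      ∀ x, pcurl q x = 0 := by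
  exact stmt_4' r hr
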